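/- If f : [a,b] × [c,d] → ℝ is co-ordinated convex, then f((a+b)/2, (c+d)/2) ≤ (1/2)[(1/(b-a))∫ₐᵇ f(x,(c+d)/2) dx + (1/(d-c))∫_c^d f((a+b)/2, y) dy]. -/

import Mathlib

open Set MeasureTheory

lemma midpoint_le_average_aux (a b : ℝ) (hab : a < b) (g : ℝ → ℝ)
    (hg : ConvexOn ℝ (Icc a b) g) (hint : IntervalIntegrable g volume a b) :
    g ((a+b)/2) ≤ (1/(b-a)) * ∫ x in a..b, g x := by
  have hint2 : IntervalIntegrable (fun x => g (a + b - x)) volume a b := by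
    have := hint.comp_sub_left (a + b)
    simpa using this.symm
  have key : ∀ x ∈ Icc a b, g ((a+b)/2) ≤ (g x + g (a+b-x))/2 := by
    intro x hx
    have hx' : a + b - x ∈ Icc a b := ⟨by linarith [hx.2], by linarith [hx.1]⟩
    have h := hg.2 hx hx' (by norm_num : (0:ℝ) ≤ 1/2) (by norm_num : (0:ℝ) ≤ 1/2)
      (by norm_num)
    have heq : (1/2 : ℝ) • x + (1/2 : ℝ) • (a + b - x) = (a+b)/2 := by
      simp only [smul_eq_mul]; ring
    rw [heq] at h
    calc g ((a+b)/2) ≤ 1/2 * g x + 1/2 * g (a+b-x) := h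
      _ = (g x + g (a+b-x))/2 := by ring
  have hmono : (∫ _ in a..b, g ((a+b)/2)) ≤ ∫ x in a..b, (g x + g (a+b-x))/2 := by
    apply intervalIntegral.integral_mono_on hab.le intervalIntegrable_const
    · exact ((hint.add hint2).div_const 2)
    · intro x hx; exact key x hx
  have hrefl : (∫ x in a..b, g (a+b-x)) = ∫ x in a..b, g x := by
    have := intervalIntegral.integral_comp_sub_left (a := a) (b := b) g (a+b)
    simpa using this
  rw [intervalIntegral.integral_const, smul_eq_mul] at hmono
  have hsplit : (∫ x in a..b, (g x + g (a+b-x))/2)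
      = ((∫ x in a..b, g x) + ∫ x in a..b, g (a+b-x))/2 := by
    rw [intervalIntegral.integral_div, intervalIntegral.integral_add hint hint2]
  rw [hsplit, hrefl] at hmono
  have hba : (0:ℝ) < b - a := by linarith
  rw [one_div, inv_mul_eq_div, le_div_iff₀ hba]
  linarith

theorem hadamard_coordinated_first
    (a b c d : ℝ) (hab : a < b) (hcd : c < d) (f : ℝ → ℝ → ℝ)
    (h1 : ∀ y ∈ Icc c d, ConvexOn ℝ (Icc a b) (fun x => f x y))
    (h2 : ∀ x ∈ Icc a b, ConvexOn ℝ (Icc c d) (fun y => f x y))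
    (hint1 : IntervalIntegrable (fun x => f x ((c+d)/2)) volume a b)
    (hint2 : IntervalIntegrable (fun y => f ((a+b)/2) y) volume c d) :
    f ((a+b)/2) ((c+d)/2) ≤
      (1/2) * ((1/(b-a)) * ∫ x in a..b, f x ((c+d)/2)
        + (1/(d-c)) * ∫ y in c..d, f ((a+b)/2) y) := by
  have hm1 : (c+d)/2 ∈ Icc c d := ⟨by linarith, by linarith⟩
  have hm2 : (a+b)/2 ∈ Icc a b := ⟨by linarith, by linarith⟩
  have hA := midpoint_le_average_aux a b hab (fun x => f x ((c+d)/2)) (h1 _ hm1) hint1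
  have hB := midpoint_le_average_aux c d hcd (fun y => f ((a+b)/2) y) (h2 _ hm2) hint2
  set IB := ∫ y in c..d, f ((a+b)/2) y with hIBdef
  rw [intervalIntegral.integral_add hint1 intervalIntegrable_const,
    intervalIntegral.integral_const, smul_eq_mul]
  set IA := ∫ x in a..b, f x ((c+d)/2) with hIAdef
  have hba : b - a ≠ 0 := by linarith
  have key : 1/(b-a) * (IA + (b-a) * (1/(d-c) * IB)) = 1/(b-a)*IA + 1/(d-c)*IB := by
    field_simp
  rw [key]
  linarith
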